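/- For every p ∈ [1, ∞), the Schatten p-norm is strictly monotone on positive semidefinite matrices: if B is positive semidefinite and P is nonzero positive semidefinite, then ‖B‖_p < ‖B + P‖_p. -/

import Mathlib

open scoped BigOperators

/-- Schatten `p`-norm of a Hermitian real matrix, defined via its eigenvalues. -/
noncomputable def schattenNorm {n : ℕ} (p : ℝ) (B : Matrix (Fin n) (Fin n) ℝ)
    (hB : B.IsHermitian) : ℝ :=
  (∑ k, |hB.eigenvalues k| ^ p) ^ (1 / p)

open Matrix in
/-- For every `p ∈ [1, ∞)`, the Schatten `p`-norm is strictly monotone on PSD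
matrices: adding a nonzero PSD matrix strictly increases the norm. -/
theorem stmt_1 {n : ℕ} (p : ℝ) (hp : 1 ≤ p)
    (B P : Matrix (Fin n) (Fin n) ℝ)
    (hB : B.PosSemidef) (hP : P.PosSemidef) (hPne : P ≠ 0) :
    schattenNorm p B hB.isHermitian < schattenNorm p (B + P) (hB.add hP).isHermitian := by
  classical
  have hp0 : (0:ℝ) < p := lt_of_lt_of_le one_pos hp
  set M := B + P with hM
  have hBH := hB.isHermitian
  have hMH := (hB.add hP).isHermitian
  set u := hBH.eigenvectorBasis with hu
  set v := hMH.eigenvectorBasis with hv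
  set lam := hBH.eigenvalues with hlam
  set mu := hMH.eigenvalues with hmu
  set c : Fin n → Fin n → ℝ := fun k j => (inner ℝ (u k) (v j) : ℝ) ^ 2 with hc
  have hcnn : ∀ k j, 0 ≤ c k j := fun k j => sq_nonneg _
  have hcol : ∀ j, ∑ k, c k j = 1 := by
    intro j
    have h := u.sum_inner_mul_inner (v j) (v j)
    have hnorm : (inner ℝ (v j) (v j) : ℝ) = 1 := by
      rw [real_inner_self_eq_norm_sq, v.orthonormal.1 j]; norm_num
    rw [hnorm] at h
    rw [← h]
    refine Finset.sum_congr rfl fun k _ => ?_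
    simp only [hc]
    rw [sq, real_inner_comm (u k) (v j), mul_comm]
  set q : Fin n → ℝ := fun k => ⇑(u k) ⬝ᵥ (M *ᵥ ⇑(u k)) with hq
  set r : Fin n → ℝ := fun k => ⇑(u k) ⬝ᵥ (P *ᵥ ⇑(u k)) with hr
  have hlamq : ∀ k, lam k = ⇑(u k) ⬝ᵥ (B *ᵥ ⇑(u k)) := by
    intro k
    have := hBH.eigenvalues_eq k
    simpa using this
  have hqlam : ∀ k, q k = lam k + r k := by
    intro k
    rw [hq, hM]
    simp only [Matrix.add_mulVec, dotProduct_add]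
    rw [hlamq k]
  have hrnn : ∀ k, 0 ≤ r k := by
    intro k
    have := hP.dotProduct_mulVec_nonneg ⇑(u k)
    simpa using this
  have hex : ∃ k, 0 < r k := by
    by_contra h
    push_neg at h
    have hr0 : ∀ k, r k = 0 := fun k => le_antisymm (h k) (hrnn k)
    have hPu : ∀ k, P *ᵥ ⇑(u k) = 0 := by
      intro k
      refine (hP.dotProduct_mulVec_zero_iff ⇑(u k)).mp ?_
      simpa using hr0 k
    apply hPne
    have hlin : Matrix.toEuclideanLin P = 0 := by
      apply u.toBasis.ext
      intro k
      rw [u.coe_toBasis]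
      ext i
      simp [Matrix.toEuclideanLin_apply, hPu k]
    exact (Matrix.toEuclideanLin (𝕜 := ℝ)).map_eq_zero_iff.mp hlin
  obtain ⟨k₀, hk₀⟩ := hex
  have hqexp : ∀ k, q k = ∑ j, c k j * mu j := by
    intro k
    have key := v.sum_inner_mul_inner (u k) ((WithLp.equiv 2 (Fin n → ℝ)).symm (M *ᵥ ⇑(u k)))
    have hMsym : Mᵀ = M := hMH
    have hterm : ∀ j, (inner ℝ (v j) ((WithLp.equiv 2 (Fin n → ℝ)).symm (M *ᵥ ⇑(u k))) : ℝ)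
        = mu j * (inner ℝ (u k) (v j) : ℝ) := by
      intro j
      have h1 : (inner ℝ (v j) ((WithLp.equiv 2 (Fin n → ℝ)).symm (M *ᵥ ⇑(u k))) : ℝ)
          = ⇑(v j) ⬝ᵥ (M *ᵥ ⇑(u k)) := by
        simp [PiLp.inner_apply, dotProduct, mul_comm]
      rw [h1, Matrix.dotProduct_mulVec, ← Matrix.mulVec_transpose, hMsym,
        hMH.mulVec_eigenvectorBasis, smul_dotProduct]
      congr 1
    have h2 : (inner ℝ (u k) ((WithLp.equiv 2 (Fin n → ℝ)).symm (M *ᵥ ⇑(u k))) : ℝ) = q k := by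
      simp [PiLp.inner_apply, dotProduct, hq, mul_comm]
    rw [h2] at key
    rw [← key]
    refine Finset.sum_congr rfl fun j _ => ?_
    rw [hterm j]; simp only [hc]; ring
  have hrow : ∀ k, ∑ j, c k j = 1 := by
    intro k
    have h := v.sum_inner_mul_inner (u k) (u k)
    have hnorm : (inner ℝ (u k) (u k) : ℝ) = 1 := by
      rw [real_inner_self_eq_norm_sq, u.orthonormal.1 k]; norm_num
    rw [hnorm] at h
    rw [← h]
    refine Finset.sum_congr rfl fun j _ => ?_
    simp only [hc]
    rw [sq, real_inner_comm (v j) (u k)]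
  have hlamnn : ∀ k, 0 ≤ lam k := hB.eigenvalues_nonneg
  have hmunn : ∀ j, 0 ≤ mu j := (hB.add hP).eigenvalues_nonneg
  have step1 : ∑ k, lam k ^ p < ∑ k, q k ^ p := by
    apply Finset.sum_lt_sum
    · intro k _
      exact Real.rpow_le_rpow (hlamnn k) (by rw [hqlam k]; linarith [hrnn k]) hp0.le
    · exact ⟨k₀, Finset.mem_univ _,
        Real.rpow_lt_rpow (hlamnn k₀) (by rw [hqlam k₀]; linarith) hp0⟩
  have step2 : ∑ k, q k ^ p ≤ ∑ j, mu j ^ p := by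
    calc ∑ k, q k ^ p ≤ ∑ k, ∑ j, c k j * mu j ^ p := by
          refine Finset.sum_le_sum fun k _ => ?_
          rw [hqexp k]
          exact Real.rpow_arith_mean_le_arith_mean_rpow Finset.univ (c k) mu
            (fun j _ => hcnn k j) (hrow k) (fun j _ => hmunn j) hp
      _ = ∑ j, mu j ^ p := by
          rw [Finset.sum_comm]
          refine Finset.sum_congr rfl fun j _ => ?_
          rw [← Finset.sum_mul, hcol j, one_mul]
  have habs : ∀ (f : Fin n → ℝ), (∀ i, 0 ≤ f i) → ∑ i, |f i| ^ p = ∑ i, f i ^ p :=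
    fun f hf => Finset.sum_congr rfl fun i _ => by rw [abs_of_nonneg (hf i)]
  rw [schattenNorm, schattenNorm, habs _ hlamnn, habs _ hmunn]
  exact Real.rpow_lt_rpow (Finset.sum_nonneg fun k _ => Real.rpow_nonneg (hlamnn k) p)
    (lt_of_lt_of_le step1 step2) (by positivity)
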